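/- (Bäcklund transformation s₁ for Painlevé III′.) Let (q, p, H) solve the Painlevé III′ Hamiltonian system with parameters v1, v2 ∈ ℂ on an open set U ⊆ ℂ with 0 ∉ U, and assume p(s) ≠ 1 for all s ∈ U. Define q̃(s) := q(s) + (v2 − v1)/(2·(p(s) − 1)) and p̃(s) := p(s). Then (q̃, p̃) solves the Painlevé III′ Hamiltonian system with parameters (v2, v1) on U, and its Hamiltonian H̃ satisfies s·H̃(s) = s·H(s) − (v2² − v1²)/4 for all s ∈ U. -/
import Mathlib


open Complex

/-- `(q, p, H)` solves the Painlevé III′ Hamiltonian system with parameters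
`v1, v2` on an open set `U ⊆ ℂ` with `0 ∉ U`. -/
def SolvesPIII' (v1 v2 : ℂ) (U : Set ℂ) (q p H : ℂ → ℂ) : Prop :=
  IsOpen U ∧ (0 : ℂ) ∉ U ∧
    DifferentiableOn ℂ q U ∧ DifferentiableOn ℂ p U ∧
    (∀ s ∈ U, s * H s =
      q s ^ 2 * p s ^ 2 - (q s ^ 2 + v1 * q s - s) * p s
        + (1 / 2) * (v1 + v2) * q s) ∧
    (∀ s ∈ U, s * deriv q s = 2 * q s ^ 2 * p s - q s ^ 2 - v1 * q s + s) ∧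
    (∀ s ∈ U, s * deriv p s =
      -2 * q s * p s ^ 2 + 2 * q s * p s + v1 * p s - (1 / 2) * (v1 + v2))
/-- Bäcklund transformation `s₁` for Painlevé III′:
`q̃ = q + (v2−v1)/(2(p−1))`, `p̃ = p` solves the system with parameters
`(v2, v1)`, and `s·H̃(s) = s·H(s) − (v2² − v1²)/4`. -/
theorem painleveIIIprime_backlund_s1 (v1 v2 : ℂ) (U : Set ℂ)
    (q p H : ℂ → ℂ)
    (hsol : SolvesPIII' v1 v2 U q p H)
    (hp1 : ∀ s ∈ U, p s ≠ 1)
    (qt pt : ℂ → ℂ)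
    (hqt : ∀ s ∈ U, qt s = q s + (v2 - v1) / (2 * (p s - 1)))
    (hpt : ∀ s ∈ U, pt s = p s) :
    ∃ Ht : ℂ → ℂ,
      SolvesPIII' v2 v1 U qt pt Ht ∧
      ∀ s ∈ U, s * Ht s = s * H s - (v2 ^ 2 - v1 ^ 2) / 4 := by
  obtain ⟨hU, h0, hq, hp, hH, hq', hp'⟩ := hsol
  have hs0 : ∀ s ∈ U, (s : ℂ) ≠ 0 := fun s hs h => h0 (h ▸ hs)
  have hne : ∀ s ∈ U, p s - 1 ≠ 0 := fun s hs => sub_ne_zero.mpr (hp1 s hs)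
  have hden : ∀ s ∈ U, 2 * (p s - 1) ≠ 0 := fun s hs =>
    mul_ne_zero two_ne_zero (hne s hs)
  -- differentiability of qt and pt
  have hqtdiff : DifferentiableOn ℂ qt U := by
    have : DifferentiableOn ℂ (fun t => q t + (v2 - v1) / (2 * (p t - 1))) U :=
      hq.add ((differentiableOn_const _).div
        ((differentiableOn_const _).mul (hp.sub (differentiableOn_const 1)))
        (fun s hs => hden s hs))
    exact this.congr hqt
  have hptdiff : DifferentiableOn ℂ pt U := hp.congr hpt
  -- derivative formulas
  have hdqt : ∀ s ∈ U, deriv qt s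
      = deriv q s - (v2 - v1) * deriv p s / (2 * (p s - 1) ^ 2) := by
    intro s hs
    have hqd : DifferentiableAt ℂ q s := hq.differentiableAt (hU.mem_nhds hs)
    have hpd : DifferentiableAt ℂ p s := hp.differentiableAt (hU.mem_nhds hs)
    have hinv : HasDerivAt (fun t => (2 * (p t - 1))⁻¹)
        (-(2 * deriv p s) / (2 * (p s - 1)) ^ 2) s :=
      (((hpd.hasDerivAt.sub_const 1).const_mul 2).inv (hden s hs))
    have h1 : HasDerivAt (fun t => q t + (v2 - v1) / (2 * (p t - 1)))
        (deriv q s + (v2 - v1) * (-(2 * deriv p s) / (2 * (p s - 1)) ^ 2)) s := by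
      have h2 := hinv.const_mul (v2 - v1)
      exact hqd.hasDerivAt.add (by simpa [div_eq_mul_inv] using h2)
    have heq : qt =ᶠ[nhds s] fun t => q t + (v2 - v1) / (2 * (p t - 1)) :=
      Filter.eventually_of_mem (hU.mem_nhds hs) hqt
    rw [Filter.EventuallyEq.deriv_eq heq, h1.deriv]
    have := hne s hs
    field_simp
    ring
  have hdpt : ∀ s ∈ U, deriv pt s = deriv p s := by
    intro s hs
    have heq : pt =ᶠ[nhds s] p := Filter.eventually_of_mem (hU.mem_nhds hs) hpt
    exact Filter.EventuallyEq.deriv_eq heq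
  refine ⟨fun s => H s - (v2 ^ 2 - v1 ^ 2) / 4 / s,
    ⟨hU, h0, hqtdiff, hptdiff, ?_, ?_, ?_⟩, ?_⟩
  · intro s hs
    have h1 := hne s hs
    have h2 := hs0 s hs
    have hd : (v2 - v1) / (2 * (p s - 1)) * (2 * (p s - 1)) = v2 - v1 :=
      div_mul_cancel₀ _ (hden s hs)
    have hstep : s * (H s - (v2 ^ 2 - v1 ^ 2) / 4 / s)
        = s * H s - (v2 ^ 2 - v1 ^ 2) / 4 := by
      rw [mul_sub, mul_comm s ((v2 ^ 2 - v1 ^ 2) / 4 / s), div_mul_cancel₀ _ h2]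
    rw [hstep, hH s hs, hqt s hs, hpt s hs]
    linear_combination
      ((v1 + v2) / 4 - q s * p s - (v2 - v1) / (2 * (p s - 1)) * p s / 2) * hd
  · intro s hs
    have h1 := hne s hs
    have h2 := hs0 s hs
    have hd : (v2 - v1) / (2 * (p s - 1)) * (2 * (p s - 1)) = v2 - v1 :=
      div_mul_cancel₀ _ (hden s hs)
    have hD : (v2 - v1) * deriv p s / (2 * (p s - 1) ^ 2) * (2 * (p s - 1) ^ 2)
        = (v2 - v1) * deriv p s :=
      div_mul_cancel₀ _ (mul_ne_zero two_ne_zero (pow_ne_zero 2 h1))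
    have hsD : s * ((v2 - v1) * deriv p s / (2 * (p s - 1) ^ 2))
        = (v2 - v1) / (2 * (p s - 1)) *
            (-2 * q s * p s + v1 - (v2 - v1) / (2 * (p s - 1))) := by
      apply mul_right_cancel₀ (mul_ne_zero two_ne_zero (pow_ne_zero 2 h1))
      linear_combination s * hD + (v2 - v1) * hp' s hs +
        ((2 * q s * p s - v1) * (p s - 1) +
          (v2 - v1) / (2 * (p s - 1)) * (p s - 1) + (v2 - v1) / 2) * hd
    rw [hdqt s hs, hqt s hs, hpt s hs]
    linear_combination hq' s hs - hsD -
      (q s + (v2 - v1) / (2 * (p s - 1))) * hd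
  · intro s hs
    have hd : (v2 - v1) / (2 * (p s - 1)) * (2 * (p s - 1)) = v2 - v1 :=
      div_mul_cancel₀ _ (hden s hs)
    rw [hdpt s hs, hqt s hs, hpt s hs]
    linear_combination hp' s hs + p s * hd
  · intro s hs
    have h2 := hs0 s hs
    rw [mul_sub, mul_comm s ((v2 ^ 2 - v1 ^ 2) / 4 / s), div_mul_cancel₀ _ h2]
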